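/- Consider SEMO or GSEMO on OneMinMax with a parent-selection mechanism such that, whenever the population does not cover the whole Pareto front, a good individual is selected with probability at least p_good. Then the expected number of iterations until the population covers the whole Pareto front is at most O((n log n)/p_good); explicitly, it is at most 2en(ln n + 1)/p_good plus lower-order terms. -/

import Mathlib

noncomputable section
open scoped ENNReal
attribute [local instance] Classical.propDecidable

namespace EMO


/-- A bit string of length `n`. -/
abbrev BitString (n : ℕ) := Fin n → Bool

/-- Number of one-bits. -/
def onesCount {n : ℕ} (x : BitString n) : ℕ :=
  (Finset.univ.filter fun i => x i = true).card

def allOnes (n : ℕ) : BitString n := fun _ => true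
def allZeros (n : ℕ) : BitString n := fun _ => false

/-- The bi-objective function OneMinMax. -/
def OneMinMax {n : ℕ} (x : BitString n) : ℤ × ℤ :=
  ((onesCount x : ℤ), (n : ℤ) - (onesCount x : ℤ))

/-- Number of leading ones. -/
def leadingOnes {n : ℕ} (x : BitString n) : ℕ :=
  (Finset.univ.filter fun i : Fin n => ∀ j : Fin n, j ≤ i → x j = true).card

/-- Number of trailing zeros. -/
def trailingZeros {n : ℕ} (x : BitString n) : ℕ :=
  (Finset.univ.filter fun i : Fin n => ∀ j : Fin n, i ≤ j → x j = false).card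

/-- The bi-objective function LOTZ. -/
def LOTZ {n : ℕ} (x : BitString n) : ℤ × ℤ :=
  ((leadingOnes x : ℤ), (trailingZeros x : ℤ))

/-- `y` dominates `x` (maximisation). -/
def dominates {n : ℕ} (f : BitString n → ℤ × ℤ) (y x : BitString n) : Prop :=
  (f x).1 ≤ (f y).1 ∧ (f x).2 ≤ (f y).2 ∧ f x ≠ f y

/-- `y` weakly dominates `x` (maximisation). -/
def weaklyDominates {n : ℕ} (f : BitString n → ℤ × ℤ) (y x : BitString n) : Prop :=
  (f x).1 ≤ (f y).1 ∧ (f x).2 ≤ (f y).2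

/-- Pareto optimality. -/
def paretoOptimal {n : ℕ} (f : BitString n → ℤ × ℤ) (x : BitString n) : Prop :=
  ¬ ∃ y : BitString n, dominates f y x

/-- A population of mutually non-dominated points. -/
def mutuallyNonDominated {n : ℕ} (f : BitString n → ℤ × ℤ)
    (P : Finset (BitString n)) : Prop :=
  ∀ x ∈ P, ∀ y ∈ P, ¬ dominates f y x

/-- Flip bit `i` of `x`. -/
def flipBit {n : ℕ} (x : BitString n) (i : Fin n) : BitString n :=
  Function.update x i (!x i)

/-- `y` is a Hamming neighbour of `x`. -/
def hammingNeighbour {n : ℕ} (x y : BitString n) : Prop :=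
  ∃ i : Fin n, y = flipBit x i

/-- `x` is good relative to population `P`: it is Pareto optimal and has a Pareto-optimal
Hamming neighbour whose objective vector is not attained by any member of `P`. -/
def isGood {n : ℕ} (f : BitString n → ℤ × ℤ) (P : Finset (BitString n))
    (x : BitString n) : Prop :=
  paretoOptimal f x ∧
    ∃ y : BitString n, hammingNeighbour x y ∧ paretoOptimal f y ∧ ∀ z ∈ P, f z ≠ f y

/-- `x` is bad relative to population `P`. -/
def isBad {n : ℕ} (f : BitString n → ℤ × ℤ) (P : Finset (BitString n))
    (x : BitString n) : Prop :=
  paretoOptimal f x ∧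
    ¬ ∃ y : BitString n, hammingNeighbour x y ∧ paretoOptimal f y ∧ ∀ z ∈ P, f z ≠ f y

/-- `P` covers the whole Pareto front of `f`. -/
def coversFront {n : ℕ} (f : BitString n → ℤ × ℤ) (P : Finset (BitString n)) : Prop :=
  ∀ x : BitString n, paretoOptimal f x → ∃ z ∈ P, f z = f x

/-- The hypervolume contribution of `x` to `P` (for a population of mutually
non-dominated points, with reference point `r`). -/
def HVC {n : ℕ} (f : BitString n → ℤ × ℤ) (r : ℤ × ℤ) (x : BitString n)
    (P : Finset (BitString n)) : ℤ :=
  ((f x).1 - (((P.filter fun z => (f z).1 < (f x).1).image fun z => (f z).1).max.unbotD r.1)) *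
  ((f x).2 - (((P.filter fun z => (f z).2 < (f x).2).image fun z => (f z).2).max.unbotD r.2))

/-- Crowding distance of `x` in `P` with respect to a single objective `g`: infinite for the
boundary points, and otherwise the normalised difference between successor and predecessor. -/
def CDCobj {n : ℕ} (g : BitString n → ℤ) (x : BitString n)
    (P : Finset (BitString n)) : ℝ≥0∞ :=
  if (∀ z ∈ P, g x ≤ g z) ∨ (∀ z ∈ P, g z ≤ g x) then ⊤
  else
    (((((P.filter fun z => g x < g z).image g).min.untopD 0 -
        (((P.filter fun z => g z < g x).image g).max.unbotD 0)).toNat : ℝ≥0∞)) /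
      ((((P.image g).max.unbotD 0 - ((P.image g).min.untopD 0)).toNat : ℝ≥0∞))

/-- The crowding distance contribution of `x` to `P`. -/
def CDC {n : ℕ} (f : BitString n → ℤ × ℤ) (x : BitString n)
    (P : Finset (BitString n)) : ℝ≥0∞ :=
  CDCobj (fun z => (f z).1) x P + CDCobj (fun z => (f z).2) x P

/-- A diversity measure `c` is diversity-favouring on `S`. -/
def diversityFavouring {n : ℕ} {α : Type*} [Preorder α] (f : BitString n → ℤ × ℤ)
    (c : BitString n → Finset (BitString n) → α) (S : Set (BitString n)) : Prop :=
  ∀ P : Finset (BitString n), mutuallyNonDominated f P →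
    ∀ x ∈ P, ∀ y ∈ P, x ∈ S → y ∈ S → isBad f P x → isGood f P y → c x P < c y P

/-- The default bit string (used only to make selection kernels total). -/
def defaultBS (n : ℕ) : BitString n := fun _ => false

/-- Local mutation: flip a single uniformly random bit. -/
def localMutation {n : ℕ} (hn : 0 < n) (x : BitString n) : PMF (BitString n) :=
  haveI : Nonempty (Fin n) := ⟨⟨0, hn⟩⟩
  (PMF.uniformOfFintype (Fin n)).map (flipBit x)

/-- A Bernoulli coin with success probability `1/n` (for `n ≥ 1`). -/
def bitFlipCoin (n : ℕ) : PMF Bool :=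
  PMF.ofFintype (fun b => cond b (min ((n : ℝ≥0∞))⁻¹ 1) (1 - min ((n : ℝ≥0∞))⁻¹ 1))
    (by rw [Fintype.sum_bool]; simp only [cond_true, cond_false]
        exact add_tsub_cancel_of_le (min_le_right _ _))

/-- Global (standard bit) mutation: flip each bit independently with probability `1/n`. -/
def globalMutationAux {n : ℕ} : List (Fin n) → BitString n → PMF (BitString n)
  | [], x => PMF.pure x
  | i :: is, x => (bitFlipCoin n).bind fun b =>
      globalMutationAux is (if b then flipBit x i else x)

def globalMutation {n : ℕ} (x : BitString n) : PMF (BitString n) :=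
  globalMutationAux (List.finRange n) x

/-- Survival selection: if `s'` is not dominated by any member of `P`, add `s'` to `P` and
remove all members weakly dominated by `s'`. -/
def updatePop {n : ℕ} (f : BitString n → ℤ × ℤ) (P : Finset (BitString n))
    (s' : BitString n) : Finset (BitString n) :=
  if ∃ z ∈ P, dominates f z s' then P
  else insert s' (P.filter fun z => ¬ weaklyDominates f s' z)

/-- One iteration of (G)SEMO with parent-selection kernel `select` and mutation `mutate`. -/
def step {n : ℕ} (f : BitString n → ℤ × ℤ)
    (select : Finset (BitString n) → PMF (BitString n))
    (mutate : BitString n → PMF (BitString n))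
    (P : Finset (BitString n)) : PMF (Finset (BitString n)) :=
  (select P).bind fun s => (mutate s).map fun s' => updatePop f P s'

/-- The L-dominant attribute `L(x) = LO(x) + TZ(x)`. -/
def Ldom {n : ℕ} (x : BitString n) : ℕ := leadingOnes x + trailingZeros x

/-- The subpopulation of points with maximum L-dominant attribute. -/
def maxLSub {n : ℕ} (P : Finset (BitString n)) : Finset (BitString n) :=
  P.filter fun x => ∀ z ∈ P, Ldom z ≤ Ldom x

/-- One iteration of the modified GSEMO: parent selection (and the diversity contribution)
is restricted to the subpopulation of points with maximum L-dominant attribute. -/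
def stepMod {n : ℕ} (f : BitString n → ℤ × ℤ)
    (select : Finset (BitString n) → PMF (BitString n))
    (mutate : BitString n → PMF (BitString n))
    (P : Finset (BitString n)) : PMF (Finset (BitString n)) :=
  (select (maxLSub P)).bind fun s => (mutate s).map fun s' => updatePop f P s'

/-- Initial population: a single uniformly random bit string. -/
def initDist (n : ℕ) : PMF (Finset (BitString n)) :=
  (PMF.uniformOfFintype (BitString n)).map fun x => {x}

/-- Distribution of the population after `t` iterations. -/
def stateDist {S : Type*} (init : PMF S) (st : S → PMF S) : ℕ → PMF S
  | 0 => init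
  | t + 1 => (stateDist init st t).bind st

/-- Expected number of iterations until an (absorbing) goal predicate is reached,
expressed as `∑ₜ Pr[goal not yet reached at time t]`. -/
def expectedRuntime {S : Type*} (init : PMF S) (st : S → PMF S) (goal : S → Prop) : ℝ≥0∞ :=
  ∑' t : ℕ, (stateDist init st t).toOuterMeasure {s | ¬ goal s}

/-- Uniform parent selection. -/
def uniformSelect {n : ℕ} (P : Finset (BitString n)) : PMF (BitString n) :=
  if h : P.Nonempty then PMF.uniformOfFinset P h else PMF.pure (defaultBS n)

/-- Highest Diversity Contribution (HDC) parent selection: select an individual with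
maximum diversity contribution, ties broken uniformly at random. -/
def HDCSelect {n : ℕ} {α : Type*} [LinearOrder α]
    (c : BitString n → Finset (BitString n) → α)
    (P : Finset (BitString n)) : PMF (BitString n) :=
  if h : P.Nonempty then
    PMF.uniformOfFinset (P.filter fun x => ∀ y ∈ P, c y P ≤ c x P)
      (by
        obtain ⟨b, hb, hmax⟩ := P.exists_max_image (fun x => c x P) h
        exact ⟨b, Finset.mem_filter.mpr ⟨hb, hmax⟩⟩)
  else PMF.pure (defaultBS n)

/-- Non-Minimum Uniform at Random (NMUAR) parent selection: select uniformly at random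
among all individuals whose diversity contribution is not minimal (from the whole
population if all contributions are equal). -/
def NMUARSelect {n : ℕ} {α : Type*} [LinearOrder α]
    (c : BitString n → Finset (BitString n) → α)
    (P : Finset (BitString n)) : PMF (BitString n) :=
  if h : P.Nonempty then
    if hQ : (P.filter fun x => ∃ y ∈ P, c y P < c x P).Nonempty then
      PMF.uniformOfFinset _ hQ
    else PMF.uniformOfFinset P h
  else PMF.pure (defaultBS n)

/-- Tournament selection with tournament size `μ = |P|`: draw `μ` individuals uniformly at
random with replacement from `P` and select one with the highest diversity contribution
among the drawn multiset (ties broken uniformly at random). -/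
def tournamentSelect {n : ℕ} {α : Type*} [LinearOrder α]
    (c : BitString n → Finset (BitString n) → α)
    (P : Finset (BitString n)) : PMF (BitString n) :=
  if h : P.Nonempty then
    haveI : Nonempty {x // x ∈ P} := h.to_subtype
    (PMF.uniformOfFintype (Fin P.card → {x // x ∈ P})).bind fun g =>
      PMF.uniformOfFinset
        ((Finset.univ.image fun i => ((g i : {x // x ∈ P}) : BitString n)).filter fun x =>
          ∀ y ∈ Finset.univ.image fun i => ((g i : {x // x ∈ P}) : BitString n), c y P ≤ c x P)
        (by
          have hne : (Finset.univ.image fun i => ((g i : {x // x ∈ P}) : BitString n)).Nonempty := by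
            refine ⟨(g ⟨0, Finset.card_pos.mpr h⟩ : {x // x ∈ P}), ?_⟩
            exact Finset.mem_image.mpr ⟨⟨0, Finset.card_pos.mpr h⟩, Finset.mem_univ _, rfl⟩
          obtain ⟨b, hb, hmax⟩ :=
            Finset.exists_max_image _ (fun x => c x P) hne
          exact ⟨b, Finset.mem_filter.mpr ⟨hb, hmax⟩⟩)
  else PMF.pure (defaultBS n)

/-- Exponential ranking scheme: probability of selecting the `i`-th ranked individual
(1-indexed) in a population of size `μ`. -/
def rExp (i μ : ℕ) : ℝ≥0∞ :=
  (2 : ℝ≥0∞)⁻¹ ^ i / ∑ j ∈ Finset.Icc 1 μ, (2 : ℝ≥0∞)⁻¹ ^ j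

/-- Power-law ranking scheme. -/
def rPow (i μ : ℕ) : ℝ≥0∞ :=
  ((i : ℝ≥0∞) ^ 2)⁻¹ / ∑ j ∈ Finset.Icc 1 μ, ((j : ℝ≥0∞) ^ 2)⁻¹

/-- Harmonic ranking scheme. -/
def rHarm (i μ : ℕ) : ℝ≥0∞ :=
  (i : ℝ≥0∞)⁻¹ / ∑ j ∈ Finset.Icc 1 μ, (j : ℝ≥0∞)⁻¹


/-- `select` implements a rank-based parent-selection scheme with rank probabilities
`r i μ` (1-indexed rank `i`, population size `μ`) with respect to the diversity
contribution `c`, for some non-increasing ordering of the population by `c`. -/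
def implementsRankScheme {n : ℕ} {α : Type*} [Preorder α]
    (c : BitString n → Finset (BitString n) → α) (r : ℕ → ℕ → ℝ≥0∞)
    (select : Finset (BitString n) → PMF (BitString n)) : Prop :=
  ∀ P : Finset (BitString n), P.Nonempty →
    ∃ l : List (BitString n), l.Nodup ∧ l.toFinset = P ∧
      l.Chain' (fun a b => c b P ≤ c a P) ∧
      (∀ i : Fin l.length, select P (l.get i) = r (i.val + 1) P.card) ∧
      (∀ x : BitString n, x ∉ P → select P x = 0)

/-- The Pareto-optimal point `1^i 0^(n-i)` of LOTZ. -/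
def opt (n i : ℕ) : BitString n := fun t => decide ((t : ℕ) < i)

/-- The whole Pareto set of LOTZ as a population. -/
def frontSet (n : ℕ) : Finset (BitString n) := (Finset.range (n + 1)).image (opt n)

/-- `P` has a gap at position `i`. -/
def hasGapAt {n : ℕ} (P : Finset (BitString n)) (i : ℕ) : Prop :=
  opt n i ∉ P ∧ (∃ j, j < i ∧ opt n j ∈ P) ∧ (∃ k, i < k ∧ k ≤ n ∧ opt n k ∈ P)

/-- `P` has a gap at some position `i` with `n/4 ≤ i ≤ 3n/4`. -/
def gapInRange (n : ℕ) (P : Finset (BitString n)) : Prop :=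
  ∃ i : ℕ, n ≤ 4 * i ∧ 4 * i ≤ 3 * n ∧ hasGapAt P i

/-- `P` contains both `0^n` and `1^n`. -/
def bothExtremes (n : ℕ) (P : Finset (BitString n)) : Prop :=
  allZeros n ∈ P ∧ allOnes n ∈ P

/-- The chain stopped (frozen) as soon as `cond` holds. -/
def stopWhen {S : Type*} (cond : S → Prop) (st : S → PMF S) (s : S) : PMF S :=
  if cond s then PMF.pure s else st s


/-! ### Auxiliary development for Statement 8 -/

section Aux8

open Finset

variable {n : ℕ}

lemma omm_eq_iff {x y : BitString n} :
    OneMinMax x = OneMinMax y ↔ onesCount x = onesCount y := by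
  constructor
  · intro h
    have := congrArg Prod.fst h
    simpa [OneMinMax] using this
  · intro h; simp [OneMinMax, h]

lemma omm_not_dominates (y x : BitString n) : ¬ dominates OneMinMax y x := by
  rintro ⟨h1, h2, h3⟩
  apply h3
  simp only [OneMinMax] at h1 h2 ⊢
  have : onesCount x = onesCount y := by omega
  simp [this]

lemma omm_pareto (x : BitString n) : paretoOptimal OneMinMax x := by
  rintro ⟨y, hy⟩; exact omm_not_dominates y x hy

lemma omm_mnd (P : Finset (BitString n)) : mutuallyNonDominated OneMinMax P :=
  fun x _ y _ => omm_not_dominates y x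

lemma omm_weakly_iff {s' z : BitString n} :
    weaklyDominates OneMinMax s' z ↔ onesCount z = onesCount s' := by
  simp only [weaklyDominates, OneMinMax]
  omega

lemma onesCount_le (x : BitString n) : onesCount x ≤ n := by
  calc onesCount x ≤ (Finset.univ : Finset (Fin n)).card := Finset.card_filter_le _ _
    _ = n := by simp

lemma onesCount_flip_true {x : BitString n} {j : Fin n} (h : x j = true) :
    onesCount (flipBit x j) + 1 = onesCount x := by
  have hset : (univ.filter fun i => flipBit x j i = true)
      = (univ.filter fun i => x i = true).erase j := by
    ext i
    by_cases hij : i = j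
    · subst hij; simp [flipBit, Function.update_apply, h]
    · simp [flipBit, Function.update_apply, hij]
  have hj : j ∈ univ.filter fun i => x i = true := by simp [h]
  rw [onesCount, onesCount, hset, Finset.card_erase_of_mem hj]
  have : 1 ≤ (univ.filter fun i => x i = true).card := Finset.card_pos.mpr ⟨j, hj⟩
  omega

lemma onesCount_flip_false {x : BitString n} {j : Fin n} (h : x j = false) :
    onesCount (flipBit x j) = onesCount x + 1 := by
  have hset : (univ.filter fun i => flipBit x j i = true)
      = insert j (univ.filter fun i => x i = true) := by
    ext i
    by_cases hij : i = j
    · subst hij; simp [flipBit, Function.update_apply, h]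
    · simp [flipBit, Function.update_apply, hij]
  have hj : j ∉ univ.filter fun i => x i = true := by simp [h]
  rw [onesCount, onesCount, hset, Finset.card_insert_of_notMem hj]

lemma onesCount_opt {k : ℕ} (hk : k ≤ n) : onesCount (opt n k) = k := by
  have h1 : (univ.filter fun t : Fin n => opt n k t = true)
      = univ.filter fun t : Fin n => (t : ℕ) < k := by
    ext t; simp [opt]
  rw [onesCount, h1, Finset.card_filter,
    Fin.sum_univ_eq_sum_range (fun i => if i < k then 1 else 0), ← Finset.card_filter]
  have h2 : (Finset.range n).filter (fun i => i < k) = Finset.range k := by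
    ext i; simp only [Finset.mem_filter, Finset.mem_range]; omega
  rw [h2, Finset.card_range]

lemma updatePop_eq (P : Finset (BitString n)) (s' : BitString n) :
    updatePop OneMinMax P s'
      = insert s' (P.filter fun z => ¬ onesCount z = onesCount s') := by
  rw [updatePop, if_neg]
  · congr 1
    apply Finset.filter_congr
    intro z _
    rw [omm_weakly_iff]
  · rintro ⟨z, _, hd⟩; exact omm_not_dominates _ _ hd

lemma updatePop_nonempty (P : Finset (BitString n)) (s' : BitString n) :
    (updatePop OneMinMax P s').Nonempty := by
  rw [updatePop_eq]; exact Finset.insert_nonempty _ _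

lemma image_updatePop_supset (P : Finset (BitString n)) (s' : BitString n) :
    insert (onesCount s') (P.image onesCount)
      ⊆ (updatePop OneMinMax P s').image onesCount := by
  intro c hc
  rcases Finset.mem_insert.mp hc with hc | hc
  · exact Finset.mem_image.mpr ⟨s', by rw [updatePop_eq]; exact Finset.mem_insert_self _ _, hc.symm⟩
  · obtain ⟨z, hz, hcz⟩ := Finset.mem_image.mp hc
    by_cases hzs : onesCount z = onesCount s'
    · refine Finset.mem_image.mpr ⟨s', ?_, by rw [← hcz, hzs]⟩
      rw [updatePop_eq]; exact Finset.mem_insert_self _ _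
    · refine Finset.mem_image.mpr ⟨z, ?_, hcz⟩
      rw [updatePop_eq]
      exact Finset.mem_insert_of_mem (Finset.mem_filter.mpr ⟨hz, hzs⟩)

/-- The set of uncovered Pareto-front values. -/
def missSet (n : ℕ) (P : Finset (BitString n)) : Finset ℕ :=
  Finset.range (n + 1) \ P.image onesCount

lemma missSet_updatePop_subset (P : Finset (BitString n)) (s' : BitString n) :
    missSet n (updatePop OneMinMax P s') ⊆ missSet n P := by
  apply Finset.sdiff_subset_sdiff (le_refl _)
  intro c hc
  exact image_updatePop_supset P s' (Finset.mem_insert_of_mem hc)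

lemma missSet_updatePop_subset_erase (P : Finset (BitString n)) (s' : BitString n) :
    missSet n (updatePop OneMinMax P s') ⊆ (missSet n P).erase (onesCount s') := by
  intro c hc
  have hc2 : c ∈ missSet n P := missSet_updatePop_subset P s' hc
  rw [missSet, Finset.mem_sdiff] at hc
  refine Finset.mem_erase.mpr ⟨?_, hc2⟩
  intro hcs
  exact hc.2 (image_updatePop_supset P s' (hcs ▸ Finset.mem_insert_self _ _))

lemma coversFront_iff (P : Finset (BitString n)) :
    coversFront OneMinMax P ↔ missSet n P = ∅ := by
  constructor
  · intro h
    rw [Finset.eq_empty_iff_forall_notMem]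
    intro k hk
    rw [missSet, Finset.mem_sdiff, Finset.mem_range] at hk
    obtain ⟨hk1, hk2⟩ := hk
    obtain ⟨z, hz, hfz⟩ := h (opt n k) (omm_pareto _)
    refine hk2 (Finset.mem_image.mpr ⟨z, hz, ?_⟩)
    rw [omm_eq_iff] at hfz
    rw [hfz, onesCount_opt (by omega)]
  · intro h x _
    have hx : onesCount x ∈ P.image onesCount := by
      by_contra hc
      have hmem : onesCount x ∈ missSet n P :=
        Finset.mem_sdiff.mpr ⟨Finset.mem_range.mpr (by have := onesCount_le x; omega), hc⟩
      rw [h] at hmem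
      exact absurd hmem (Finset.notMem_empty _)
    obtain ⟨z, hz, hcz⟩ := Finset.mem_image.mp hx
    exact ⟨z, hz, omm_eq_iff.mpr hcz⟩

lemma coversFront_updatePop {P : Finset (BitString n)} (h : coversFront OneMinMax P)
    (s' : BitString n) : coversFront OneMinMax (updatePop OneMinMax P s') := by
  rw [coversFront_iff] at h ⊢
  exact Finset.subset_empty.mp (h ▸ missSet_updatePop_subset P s')

end Aux8

section EvCalc

/-- Expected value of a nonnegative function under a PMF. -/
def ev {α : Type*} (m : PMF α) (g : α → ℝ≥0∞) : ℝ≥0∞ := ∑' a, m a * g a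

lemma ev_bind {α β : Type*} (m : PMF α) (f : α → PMF β) (g : β → ℝ≥0∞) :
    ev (m.bind f) g = ∑' a, m a * ev (f a) g := by
  simp only [ev, PMF.bind_apply]
  calc ∑' b, (∑' a, m a * f a b) * g b
      = ∑' b, ∑' a, m a * f a b * g b := by simp_rw [ENNReal.tsum_mul_right]
    _ = ∑' a, ∑' b, m a * f a b * g b := ENNReal.tsum_comm
    _ = ∑' a, m a * ∑' b, f a b * g b := by simp_rw [mul_assoc, ENNReal.tsum_mul_left]

lemma ev_pure {α : Type*} (a : α) (g : α → ℝ≥0∞) : ev (PMF.pure a) g = g a := by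
  rw [ev, tsum_eq_single a]
  · simp [PMF.pure_apply]
  · intro b hb; simp [PMF.pure_apply, hb]

lemma ev_map {α β : Type*} (m : PMF α) (φ : α → β) (g : β → ℝ≥0∞) :
    ev (m.map φ) g = ev m (fun a => g (φ a)) := by
  rw [PMF.map, ev_bind]
  apply tsum_congr
  intro a
  rw [Function.comp_apply, ev_pure]

lemma ev_mono {α : Type*} (m : PMF α) {g₁ g₂ : α → ℝ≥0∞} (h : ∀ a, g₁ a ≤ g₂ a) :
    ev m g₁ ≤ ev m g₂ :=
  ENNReal.tsum_le_tsum fun a => mul_le_mul_right (h a) _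

lemma ev_const {α : Type*} (m : PMF α) (c : ℝ≥0∞) : ev m (fun _ => c) = c := by
  rw [ev, ENNReal.tsum_mul_right, PMF.tsum_coe, one_mul]

lemma ev_add {α : Type*} (m : PMF α) (g₁ g₂ : α → ℝ≥0∞) :
    ev m (fun a => g₁ a + g₂ a) = ev m g₁ + ev m g₂ := by
  simp only [ev, mul_add]
  exact ENNReal.tsum_add

lemma ev_mul_left {α : Type*} (m : PMF α) (c : ℝ≥0∞) (g : α → ℝ≥0∞) :
    ev m (fun a => c * g a) = c * ev m g := by
  simp only [ev, ← ENNReal.tsum_mul_left]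
  congr 1; funext a; ring

lemma toOuterMeasure_eq_ev {α : Type*} (p : PMF α) (S : Set α) :
    p.toOuterMeasure S = ev p (fun a => if a ∈ S then 1 else 0) := by
  rw [PMF.toOuterMeasure_apply, ev]
  apply tsum_congr
  intro a
  by_cases h : a ∈ S <;> simp [Set.indicator_apply, h]

/-- Generic additive-drift / potential-function bound on the expected runtime. -/
lemma runtime_le {S : Type*} (init : PMF S) (st : S → PMF S) (goal : S → Prop)
    (I : S → Prop) (h : S → ℝ≥0∞) (H : ℝ≥0∞)
    (hinit : ∀ s ∈ init.support, I s)
    (hpres : ∀ s, I s → ∀ s' ∈ (st s).support, I s')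
    (habs : ∀ s, I s → goal s → ∀ s' ∈ (st s).support, goal s')
    (hdrift : ∀ s, I s → ¬ goal s →
      1 + ev (st s) (fun s' => if goal s' then 0 else h s') ≤ h s)
    (hbound : ∀ s, h s ≤ H) :
    expectedRuntime init st goal ≤ H := by
  classical
  set G : S → ℝ≥0∞ := fun s => if goal s then 0 else h s with hG
  set P : ℕ → PMF S := stateDist init st with hP
  have hinv : ∀ t, ∀ s ∈ (P t).support, I s := by
    intro t
    induction t with
    | zero => exact hinit
    | succ t ih =>
      intro s hs
      have : P (t+1) = (P t).bind st := rfl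
      rw [this] at hs
      obtain ⟨a, ha, hsa⟩ := (PMF.mem_support_bind_iff _ _ _).mp hs
      exact hpres a (ih a ha) s hsa
  set m : ℕ → ℝ≥0∞ := fun t => (P t).toOuterMeasure {s | ¬ goal s} with hm
  set a : ℕ → ℝ≥0∞ := fun t => ev (P t) G with ha
  have hstep : ∀ t, m t + a (t + 1) ≤ a t := by
    intro t
    have h1 : a (t + 1) = ∑' s, P t s * ev (st s) G := by
      rw [ha]
      show ev ((P t).bind st) G = _
      exact ev_bind _ _ _
    have h2 : m t = ∑' s, P t s * (if ¬ goal s then 1 else 0) := by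
      rw [hm]
      show (P t).toOuterMeasure {s | ¬ goal s} = _
      rw [toOuterMeasure_eq_ev]
      simp only [ev, Set.mem_setOf_eq]
    rw [h1, h2, ← ENNReal.tsum_add]
    have : a t = ∑' s, P t s * G s := rfl
    rw [this]
    apply ENNReal.tsum_le_tsum
    intro s
    rw [← mul_add]
    by_cases hs0 : P t s = 0
    · simp [hs0]
    have hIs : I s := hinv t s (PMF.mem_support_iff _ _ |>.mpr hs0)
    apply mul_le_mul_right
    by_cases hgs : goal s
    · have hev : ev (st s) G = 0 := by
        rw [ev, ENNReal.tsum_eq_zero]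
        intro s'
        by_cases hss' : st s s' = 0
        · simp [hss']
        · have : goal s' := habs s hIs hgs s' (PMF.mem_support_iff _ _ |>.mpr hss')
          simp [hG, this]
      rw [hev]; simp [hgs, hG]
    · calc (if ¬ goal s then (1:ℝ≥0∞) else 0) + ev (st s) G
          = 1 + ev (st s) G := by rw [if_pos hgs]
        _ ≤ h s := hdrift s hIs hgs
        _ = G s := (if_neg hgs).symm
  have htel : ∀ T, (∑ t ∈ Finset.range T, m t) + a T ≤ a 0 := by
    intro T
    induction T with
    | zero => simp
    | succ T ih =>
      rw [Finset.sum_range_succ, add_assoc]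
      calc (∑ t ∈ Finset.range T, m t) + (m T + a (T + 1))
          ≤ (∑ t ∈ Finset.range T, m t) + a T := add_le_add_right (hstep T) _
        _ ≤ a 0 := ih
  have ha0 : a 0 ≤ H := by
    calc a 0 = ev init G := rfl
      _ ≤ ev init (fun _ => H) := ev_mono _ (fun s => by
          by_cases hgs : goal s <;> simp [hG, hgs, hbound s])
      _ = H := ev_const _ _
  have : expectedRuntime init st goal = ∑' t, m t := rfl
  rw [this, ENNReal.tsum_eq_iSup_nat]
  apply iSup_le
  intro T
  calc ∑ t ∈ Finset.range T, m t ≤ (∑ t ∈ Finset.range T, m t) + a T := le_self_add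
    _ ≤ a 0 := htel T
    _ ≤ H := ha0

end EvCalc

section Mut

open Finset

variable {n : ℕ}

lemma flipBit_injective (x : BitString n) : Function.Injective (flipBit x) := by
  intro i j hij
  by_contra hne
  have h1 : flipBit x i i = !x i := by simp [flipBit]
  have h2 : flipBit x j i = x i := by
    simp [flipBit, Function.update_apply, hne]
  rw [hij, h2] at h1
  exact Bool.not_ne_self (x i) h1.symm

/-- Abstract mutation guarantee: creating any particular neighbouring objective value
has probability at least (number of useful bits)/(3n). -/
def mutOK (n : ℕ) (mutate : BitString n → PMF (BitString n)) : Prop :=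
  ∀ (x : BitString n) (v : ℕ),
    ((Finset.univ.filter fun i => onesCount (flipBit x i) = v).card : ℝ≥0∞)
        * ((3 * n : ℕ) : ℝ≥0∞)⁻¹
      ≤ ev (mutate x) (fun s' => if onesCount s' = v then 1 else 0)

lemma mutOK_local (hn : 0 < n) : mutOK n (localMutation hn) := by
  intro x v
  haveI : Nonempty (Fin n) := ⟨⟨0, hn⟩⟩
  have hev : ev (localMutation hn x) (fun s' => if onesCount s' = v then 1 else 0)
      = ∑ i : Fin n, ((n : ℝ≥0∞))⁻¹ * (if onesCount (flipBit x i) = v then 1 else 0) := by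
    show ev ((PMF.uniformOfFintype (Fin n)).map (flipBit x)) _ = _
    rw [ev_map, ev, tsum_fintype]
    apply Finset.sum_congr rfl
    intro i _
    rw [PMF.uniformOfFintype_apply, Fintype.card_fin]
  rw [hev]
  have h2 : ∑ i : Fin n, ((n : ℝ≥0∞))⁻¹ * (if onesCount (flipBit x i) = v then 1 else 0)
      = ((Finset.univ.filter fun i => onesCount (flipBit x i) = v).card : ℝ≥0∞)
        * ((n : ℝ≥0∞))⁻¹ := by
    simp only [mul_ite, mul_one, mul_zero]
    rw [← Finset.sum_filter, Finset.sum_const, nsmul_eq_mul]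
  rw [h2]
  apply mul_le_mul_right
  apply ENNReal.inv_le_inv'
  exact_mod_cast Nat.cast_le.mpr (by omega : n ≤ 3 * n)

lemma coin_true (n : ℕ) : bitFlipCoin n true = min ((n : ℝ≥0∞))⁻¹ 1 := rfl

lemma coin_false (n : ℕ) : bitFlipCoin n false = 1 - min ((n : ℝ≥0∞))⁻¹ 1 := rfl

lemma globalMutationAux_eq_zero {y : BitString n} {j : Fin n} :
    ∀ (l : List (Fin n)) (x : BitString n), j ∉ l → y j ≠ x j →
      globalMutationAux l x y = 0 := by
  intro l
  induction l with
  | nil =>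
    intro x _ hne
    simp only [globalMutationAux, PMF.pure_apply]
    rw [if_neg]
    intro h
    exact hne (by rw [h])
  | cons i is ih =>
    intro x hj hne
    have hji : j ≠ i := fun h => hj (h ▸ (List.mem_cons_self : i ∈ i :: is))
    have hjis : j ∉ is := fun h => hj (List.mem_cons_of_mem _ h)
    simp only [globalMutationAux, PMF.bind_apply]
    rw [ENNReal.tsum_eq_zero]
    intro b
    have h0 : globalMutationAux is (if b then flipBit x i else x) y = 0 := by
      apply ih _ hjis
      cases b
      · simpa using hne
      · simpa [flipBit, Function.update_apply, hji] using hne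
    rw [h0, mul_zero]

lemma globalMutationAux_apply {y : BitString n} :
    ∀ (l : List (Fin n)) (x : BitString n), l.Nodup →
      (∀ j : Fin n, y j ≠ x j → j ∈ l) →
      globalMutationAux l x y
        = (min ((n : ℝ≥0∞))⁻¹ 1) ^ (Finset.univ.filter fun j => y j ≠ x j).card
          * (1 - min ((n : ℝ≥0∞))⁻¹ 1)
              ^ (l.length - (Finset.univ.filter fun j => y j ≠ x j).card) := by
  set q := min ((n : ℝ≥0∞))⁻¹ 1 with hq
  intro l
  induction l with
  | nil =>
    intro x _ hcov
    have hyx : y = x := by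
      funext j
      by_contra hne
      exact List.not_mem_nil (hcov j hne)
    subst hyx
    have hfe : (Finset.univ.filter fun j : Fin n => y j ≠ y j) = ∅ := by
      apply Finset.filter_false_of_mem
      intro j _
      simp
    simp [globalMutationAux, hfe, PMF.pure_apply]
  | cons i is ih =>
    intro x hnd hcov
    have hiis : i ∉ is := (List.nodup_cons.mp hnd).1
    have hndis : is.Nodup := (List.nodup_cons.mp hnd).2
    have hbind : globalMutationAux (i :: is) x y
        = (1 - q) * globalMutationAux is x y
          + q * globalMutationAux is (flipBit x i) y := by
      show ((bitFlipCoin n).bind fun b =>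
        globalMutationAux is (if b then flipBit x i else x)) y = _
      rw [PMF.bind_apply, tsum_fintype, Fintype.sum_bool]
      simp only [if_true, if_false, Bool.false_eq_true, Bool.true_eq_false,
        coin_true, coin_false, ← hq]
      ring
    rw [hbind]
    by_cases h : y i = x i
    · have h1 : globalMutationAux is (flipBit x i) y = 0 := by
        apply globalMutationAux_eq_zero is (flipBit x i) hiis
        rw [h]
        simp [flipBit]
      have hcov' : ∀ j : Fin n, y j ≠ x j → j ∈ is := by
        intro j hj
        rcases List.mem_cons.mp (hcov j hj) with rfl | hm
        · exact absurd h hj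
        · exact hm
      have hDle : (Finset.univ.filter fun j => y j ≠ x j).card ≤ is.length := by
        have hsub : (Finset.univ.filter fun j => y j ≠ x j) ⊆ is.toFinset := by
          intro j hj
          exact List.mem_toFinset.mpr (hcov' j (Finset.mem_filter.mp hj).2)
        calc _ ≤ is.toFinset.card := Finset.card_le_card hsub
          _ = is.length := List.toFinset_card_of_nodup hndis
      rw [h1, mul_zero, add_zero, ih x hndis hcov', List.length_cons]
      rw [show is.length + 1 - (Finset.univ.filter fun j => y j ≠ x j).card
          = (is.length - (Finset.univ.filter fun j => y j ≠ x j).card) + 1 from by omega]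
      rw [pow_succ]
      ring
    · have h0 : globalMutationAux is x y = globalMutationAux is x y := rfl
      have hz : globalMutationAux is x y = 0 :=
        globalMutationAux_eq_zero is x hiis h
      have hset : (Finset.univ.filter fun j => y j ≠ flipBit x i j)
          = (Finset.univ.filter fun j => y j ≠ x j).erase i := by
        ext j
        by_cases hji : j = i
        · subst hji
          have hyi : y j = !(x j) := by
            cases hx : x j <;> cases hy : y j <;> simp_all
          simp [flipBit, Function.update_apply, hyi]
        · simp [flipBit, Function.update_apply, hji, Finset.mem_erase, hji]
      have hiD : i ∈ (Finset.univ.filter fun j => y j ≠ x j) := by simp [h]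
      have hcov' : ∀ j : Fin n, y j ≠ flipBit x i j → j ∈ is := by
        intro j hj
        have hji : j ≠ i := by
          intro hj'
          subst hj'
          apply hj
          have hyj : y j = !(x j) := by
            cases hx : x j <;> cases hy : y j <;> simp_all
          simp [flipBit, hyj]
        have hyx : y j ≠ x j := by
          simpa [flipBit, Function.update_apply, hji] using hj
        rcases List.mem_cons.mp (hcov j hyx) with h' | h'
        · exact absurd h' hji
        · exact h'
      have hd1 : 1 ≤ (Finset.univ.filter fun j => y j ≠ x j).card :=
        Finset.card_pos.mpr ⟨i, hiD⟩
      rw [hz, mul_zero, zero_add, ih (flipBit x i) hndis hcov', hset,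
        Finset.card_erase_of_mem hiD, List.length_cons]
      generalize (Finset.univ.filter fun j => y j ≠ x j).card = d at hd1 ⊢
      obtain ⟨e, rfl⟩ : ∃ e, d = e + 1 := ⟨d - 1, by omega⟩
      rw [show e + 1 - 1 = e from by omega,
        show is.length + 1 - (e + 1) = is.length - e from by omega, pow_succ]
      ring

lemma globalMutation_apply_flip (hn : 0 < n) (x : BitString n) (i : Fin n) :
    globalMutation x (flipBit x i)
      = (n : ℝ≥0∞)⁻¹ * (1 - (n : ℝ≥0∞)⁻¹) ^ (n - 1) := by
  have hq : min ((n : ℝ≥0∞))⁻¹ 1 = (n : ℝ≥0∞)⁻¹ := by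
    apply min_eq_left
    rw [ENNReal.inv_le_one]
    exact_mod_cast Nat.one_le_cast.mpr hn
  have hfilter : (Finset.univ.filter fun j => flipBit x i j ≠ x j) = {i} := by
    ext j
    by_cases hji : j = i
    · subst hji; simp [flipBit, Function.update_apply]
    · simp [flipBit, Function.update_apply, hji]
  rw [globalMutation, globalMutationAux_apply (List.finRange n) x
    (List.nodup_finRange n) (fun j _ => List.mem_finRange j), hfilter,
    Finset.card_singleton, List.length_finRange, pow_one, hq]

lemma ennreal_one_sub_inv_pow (hn : 0 < n) :
    (3 : ℝ≥0∞)⁻¹ ≤ (1 - (n : ℝ≥0∞)⁻¹) ^ (n - 1) := by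
  rcases Nat.lt_or_ge n 2 with h2 | h2
  · have hn1 : n = 1 := by omega
    subst hn1
    simpa using ENNReal.inv_le_one.mpr (by norm_num : (1:ℝ≥0∞) ≤ 3)
  · have hnR : (2 : ℝ) ≤ n := by exact_mod_cast h2
    have hr0 : (0 : ℝ) ≤ 1 - 1 / n := by
      have h1n : 1 / (n : ℝ) ≤ 1 := by
        rw [div_le_one (by linarith)]
        linarith
      linarith
    have hstep : ENNReal.ofReal (1 - 1 / n) = 1 - (n : ℝ≥0∞)⁻¹ := by
      rw [ENNReal.ofReal_sub _ (by positivity), ENNReal.ofReal_one, one_div,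
        ENNReal.ofReal_inv_of_pos (by positivity), ENNReal.ofReal_natCast]
    have hexp : Real.exp (-(1 / ((n : ℝ) - 1))) ≤ 1 - 1 / n := by
      have h1 : 1 / ((n : ℝ) - 1) + 1 ≤ Real.exp (1 / ((n : ℝ) - 1)) :=
        Real.add_one_le_exp _
      have hpos : (0 : ℝ) < 1 - 1 / n := by
        rw [sub_pos, div_lt_one (by linarith)]
        linarith
      have hexppos := Real.exp_pos (1 / ((n : ℝ) - 1))
      rw [Real.exp_neg]
      rw [inv_le_comm₀ hexppos hpos]
      have hcomp : (1 - 1 / (n : ℝ))⁻¹ = 1 / ((n : ℝ) - 1) + 1 := by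
        have hne : (n : ℝ) - 1 ≠ 0 := by linarith
        have hn0 : (n : ℝ) ≠ 0 := by linarith
        rw [show (1 : ℝ) - 1 / n = ((n : ℝ) - 1) / n from by field_simp, inv_div]
        rw [div_add' _ _ _ hne, div_eq_div_iff hne hne]
        ring
      rw [hcomp]
      exact h1
    have hpow : Real.exp (-1) ≤ (1 - 1 / (n : ℝ)) ^ (n - 1) := by
      have hmono := pow_le_pow_left₀ (Real.exp_pos _).le hexp (n - 1)
      rw [← Real.exp_nat_mul] at hmono
      have harg : ((n - 1 : ℕ) : ℝ) * (-(1 / ((n : ℝ) - 1))) = -1 := by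
        have hc : ((n - 1 : ℕ) : ℝ) = (n : ℝ) - 1 := by
          push_cast [Nat.cast_sub (by omega : 1 ≤ n)]
          ring
        have hne : (n : ℝ) - 1 ≠ 0 := by linarith
        rw [hc, mul_neg, mul_one_div, div_self hne]
      rw [harg] at hmono
      exact hmono
    have h13 : (1 : ℝ) / 3 ≤ Real.exp (-1) := by
      rw [Real.exp_neg, one_div]
      apply inv_anti₀ (Real.exp_pos 1)
      exact le_of_lt (lt_trans Real.exp_one_lt_d9 (by norm_num))
    calc (3 : ℝ≥0∞)⁻¹ = ENNReal.ofReal ((1 : ℝ) / 3) := by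
          rw [one_div, ENNReal.ofReal_inv_of_pos (by norm_num)]
          norm_num
      _ ≤ ENNReal.ofReal ((1 - 1 / (n : ℝ)) ^ (n - 1)) := by
          apply ENNReal.ofReal_le_ofReal
          linarith
      _ = (ENNReal.ofReal (1 - 1 / (n : ℝ))) ^ (n - 1) := (ENNReal.ofReal_pow hr0 _)
      _ = (1 - (n : ℝ≥0∞)⁻¹) ^ (n - 1) := by rw [hstep]

lemma mutOK_global (hn : 0 < n) : mutOK n globalMutation := by
  intro x v
  set T := (Finset.univ.filter fun i => onesCount (flipBit x i) = v) with hT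
  have hpoint : ∀ i ∈ T, ((3 * n : ℕ) : ℝ≥0∞)⁻¹ ≤ globalMutation x (flipBit x i) := by
    intro i _
    rw [globalMutation_apply_flip hn]
    have hc : ((3 * n : ℕ) : ℝ≥0∞) = 3 * (n : ℝ≥0∞) := by push_cast; ring
    rw [hc, ENNReal.mul_inv (Or.inl (by norm_num)) (Or.inl (by simp)),
      mul_comm ((3 : ℝ≥0∞))⁻¹ _]
    exact mul_le_mul_right (ennreal_one_sub_inv_pow hn) _
  calc (T.card : ℝ≥0∞) * ((3 * n : ℕ) : ℝ≥0∞)⁻¹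
      = ∑ _i ∈ T, ((3 * n : ℕ) : ℝ≥0∞)⁻¹ := by rw [Finset.sum_const, nsmul_eq_mul]
    _ ≤ ∑ i ∈ T, globalMutation x (flipBit x i) := Finset.sum_le_sum hpoint
    _ = ∑ y ∈ T.image (flipBit x), globalMutation x y :=
        (Finset.sum_image (fun a _ b _ h => flipBit_injective x h)).symm
    _ ≤ ∑ y ∈ T.image (flipBit x),
          globalMutation x y * (if onesCount y = v then 1 else 0) := by
        apply Finset.sum_le_sum
        intro y hy
        obtain ⟨i, hi, rfl⟩ := Finset.mem_image.mp hy
        rw [if_pos (Finset.mem_filter.mp hi).2, mul_one]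
    _ ≤ ev (globalMutation x) (fun s' => if onesCount s' = v then 1 else 0) :=
        ENNReal.sum_le_tsum _

end Mut

section Drift

open Finset

variable {n : ℕ}

/-- Weights for the potential function. -/
def wgt (n v : ℕ) : ℝ≥0∞ := ((v + 1 : ℕ) : ℝ≥0∞)⁻¹ + ((n - v + 1 : ℕ) : ℝ≥0∞)⁻¹

/-- The potential function: scaled total weight of all uncovered values. -/
def hpot (n : ℕ) (p : ℝ≥0∞) (P : Finset (BitString n)) : ℝ≥0∞ :=
  ((3 * n : ℕ) : ℝ≥0∞) * p⁻¹ * ∑ v ∈ missSet n P, wgt n v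

lemma good_witness {P : Finset (BitString n)} {x : BitString n}
    (hg : isGood OneMinMax P x) :
    ∃ v, v ∈ missSet n P ∧
      (1 : ℝ≥0∞) ≤ ((univ.filter fun i => onesCount (flipBit x i) = v).card : ℝ≥0∞)
        * wgt n v := by
  obtain ⟨-, y, ⟨i, rfl⟩, -, hy⟩ := hg
  refine ⟨onesCount (flipBit x i), ?_, ?_⟩
  · rw [missSet, Finset.mem_sdiff]
    constructor
    · exact Finset.mem_range.mpr (by have := onesCount_le (flipBit x i); omega)
    · intro hmem
      obtain ⟨z, hz, hcz⟩ := Finset.mem_image.mp hmem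
      exact hy z hz (omm_eq_iff.mpr hcz)
  · by_cases hxi : x i = true
    · have hv := onesCount_flip_true hxi
      have hsub : (univ.filter fun j => x j = true)
          ⊆ univ.filter fun j => onesCount (flipBit x j) = onesCount (flipBit x i) := by
        intro j hj
        rw [Finset.mem_filter] at hj ⊢
        refine ⟨Finset.mem_univ _, ?_⟩
        have := onesCount_flip_true hj.2
        omega
      have hcard : onesCount (flipBit x i) + 1
          ≤ (univ.filter fun j =>
              onesCount (flipBit x j) = onesCount (flipBit x i)).card := by
        calc onesCount (flipBit x i) + 1 = onesCount x := hv
          _ = (univ.filter fun j => x j = true).card := rfl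
          _ ≤ _ := Finset.card_le_card hsub
      set v := onesCount (flipBit x i) with hvdef
      calc (1 : ℝ≥0∞) = ((v + 1 : ℕ) : ℝ≥0∞) * ((v + 1 : ℕ) : ℝ≥0∞)⁻¹ :=
            (ENNReal.mul_inv_cancel (by exact_mod_cast Nat.succ_ne_zero v)
              (ENNReal.natCast_ne_top _)).symm
        _ ≤ _ := by
            apply mul_le_mul'
            · exact_mod_cast hcard
            · exact self_le_add_right _ _
    · have hxi' : x i = false := by simpa using hxi
      have hv := onesCount_flip_false hxi'
      have hnpos : 0 < n := i.pos
      have hlt : onesCount x < n := by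
        have hsub' : (univ.filter fun j => x j = true) ⊆ univ.erase i := by
          intro j hj
          rw [Finset.mem_filter] at hj
          refine Finset.mem_erase.mpr ⟨?_, Finset.mem_univ _⟩
          intro hji
          subst hji
          rw [hj.2] at hxi'
          cases hxi'
        calc onesCount x ≤ (univ.erase i).card := Finset.card_le_card hsub'
          _ = n - 1 := by rw [Finset.card_erase_of_mem (Finset.mem_univ _)]; simp
          _ < n := by omega
      have hsub : (univ.filter fun j => x j = false)
          ⊆ univ.filter fun j => onesCount (flipBit x j) = onesCount (flipBit x i) := by
        intro j hj
        rw [Finset.mem_filter] at hj ⊢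
        refine ⟨Finset.mem_univ _, ?_⟩
        rw [onesCount_flip_false hj.2, hv]
      have hzeros : (univ.filter fun j => x j = false).card = n - onesCount x := by
        have hcompl : (univ.filter fun j => x j = false)
            = univ \ (univ.filter fun j => x j = true) := by
          ext j
          rw [Finset.mem_sdiff, Finset.mem_filter, Finset.mem_filter]
          cases hx : x j <;> simp [hx]
        rw [hcompl, Finset.card_sdiff_of_subset (Finset.filter_subset _ _)]
        have : (univ : Finset (Fin n)).card = n := by simp
        rw [this]
        rfl
      set v := onesCount (flipBit x i) with hvdef
      have harith : n - v + 1 = n - onesCount x := by omega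
      calc (1 : ℝ≥0∞) = ((n - v + 1 : ℕ) : ℝ≥0∞) * ((n - v + 1 : ℕ) : ℝ≥0∞)⁻¹ :=
            (ENNReal.mul_inv_cancel (by exact_mod_cast Nat.succ_ne_zero (n - v))
              (ENNReal.natCast_ne_top _)).symm
        _ ≤ _ := by
            apply mul_le_mul'
            · rw [harith, ← hzeros]
              exact_mod_cast Finset.card_le_card hsub
            · exact le_add_self

lemma step_drift (hn : 0 < n) (p : ℝ≥0∞) (hp0 : p ≠ 0) (hp1 : p ≤ 1)
    (select : Finset (BitString n) → PMF (BitString n))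
    (hsel : ∀ P : Finset (BitString n), P.Nonempty → mutuallyNonDominated OneMinMax P →
      ¬ coversFront OneMinMax P →
      p ≤ (select P).toOuterMeasure {x | isGood OneMinMax P x})
    (mutate : BitString n → PMF (BitString n)) (hmut : mutOK n mutate)
    (P : Finset (BitString n)) (hP : P.Nonempty) (hng : ¬ coversFront OneMinMax P) :
    1 + ev (step OneMinMax select mutate P)
        (fun Q => if coversFront OneMinMax Q then 0 else hpot n p Q)
      ≤ hpot n p P := by
  set G : Finset (BitString n) → ℝ≥0∞ :=
    fun Q => if coversFront OneMinMax Q then 0 else hpot n p Q with hG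
  set N : ℝ≥0∞ := ((3 * n : ℕ) : ℝ≥0∞) with hN
  have hN0 : N ≠ 0 := by
    rw [hN]
    exact_mod_cast (by omega : 3 * n ≠ 0)
  have hNt : N ≠ ⊤ := ENNReal.natCast_ne_top _
  have hpt : p ≠ ⊤ := ne_top_of_le_ne_top ENNReal.one_ne_top hp1
  have hGle : ∀ s' : BitString n, G (updatePop OneMinMax P s') ≤ hpot n p P := by
    intro s'
    simp only [hG]
    by_cases hc : coversFront OneMinMax (updatePop OneMinMax P s')
    · simp [hc]
    · rw [if_neg hc]
      apply mul_le_mul_right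
      exact Finset.sum_le_sum_of_subset (missSet_updatePop_subset P s')
  have hF : ∀ s, isGood OneMinMax P s →
      ev (mutate s) (fun s' => G (updatePop OneMinMax P s')) + p⁻¹ ≤ hpot n p P := by
    intro s hs
    obtain ⟨v, hvmiss, hprod⟩ := good_witness hs
    have hkey : ∀ s' : BitString n, G (updatePop OneMinMax P s')
        + (N * p⁻¹ * wgt n v) * (if onesCount s' = v then 1 else 0) ≤ hpot n p P := by
      intro s'
      by_cases hcv : onesCount s' = v
      · rw [if_pos hcv, mul_one]
        have h1 : G (updatePop OneMinMax P s')
            ≤ N * p⁻¹ * ∑ u ∈ (missSet n P).erase v, wgt n u := by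
          simp only [hG]
          by_cases hc : coversFront OneMinMax (updatePop OneMinMax P s')
          · simp [hc]
          · rw [if_neg hc]
            apply mul_le_mul_right
            apply Finset.sum_le_sum_of_subset
            rw [← hcv]
            exact missSet_updatePop_subset_erase P s'
        calc G (updatePop OneMinMax P s') + N * p⁻¹ * wgt n v
            ≤ N * p⁻¹ * (∑ u ∈ (missSet n P).erase v, wgt n u) + N * p⁻¹ * wgt n v :=
              add_le_add_left h1 _
          _ = N * p⁻¹ * ((∑ u ∈ (missSet n P).erase v, wgt n u) + wgt n v) := by ring
          _ = N * p⁻¹ * ∑ u ∈ missSet n P, wgt n u := by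
              rw [Finset.sum_erase_add _ _ hvmiss]
          _ = hpot n p P := rfl
      · rw [if_neg hcv, mul_zero, add_zero]
        exact hGle s'
    have hev := ev_mono (mutate s)
      (g₁ := fun s' => G (updatePop OneMinMax P s')
        + (N * p⁻¹ * wgt n v) * (if onesCount s' = v then 1 else 0))
      (g₂ := fun _ => hpot n p P) hkey
    rw [ev_add, ev_mul_left, ev_const] at hev
    refine le_trans (add_le_add_right ?_ _) hev
    have hmut' := hmut s v
    have hNN : N * N⁻¹ = 1 := ENNReal.mul_inv_cancel hN0 hNt
    calc p⁻¹ = p⁻¹ * 1 := (mul_one _).symm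
      _ ≤ p⁻¹ * (((univ.filter fun i => onesCount (flipBit s i) = v).card : ℝ≥0∞)
            * wgt n v) := mul_le_mul_right hprod _
      _ = (N * p⁻¹ * wgt n v)
            * (((univ.filter fun i => onesCount (flipBit s i) = v).card : ℝ≥0∞) * N⁻¹) := by
          calc p⁻¹ * (((univ.filter fun i => onesCount (flipBit s i) = v).card : ℝ≥0∞)
                * wgt n v)
              = (N * N⁻¹) * (p⁻¹
                  * (((univ.filter fun i => onesCount (flipBit s i) = v).card : ℝ≥0∞)
                    * wgt n v)) := by rw [hNN, one_mul]
            _ = _ := by ring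
      _ ≤ (N * p⁻¹ * wgt n v)
            * ev (mutate s) (fun s' => if onesCount s' = v then 1 else 0) := by
          apply mul_le_mul_right
          exact hmut'
  have hstep : ev (step OneMinMax select mutate P) G
      = ∑' s, select P s * ev (mutate s) (fun s' => G (updatePop OneMinMax P s')) := by
    rw [step, ev_bind]
    apply tsum_congr
    intro s
    rw [ev_map]
  have hselP0 := hsel P hP (omm_mnd P) hng
  have hselP : p ≤ ev (select P)
      (fun x => if x ∈ {x | isGood OneMinMax P x} then 1 else 0) := by
    rw [← toOuterMeasure_eq_ev]
    exact hselP0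
  have hone : (1 : ℝ≥0∞) ≤ p⁻¹
      * ev (select P) (fun x => if x ∈ {x | isGood OneMinMax P x} then 1 else 0) := by
    calc (1 : ℝ≥0∞) = p⁻¹ * p := (ENNReal.inv_mul_cancel hp0 hpt).symm
      _ ≤ _ := mul_le_mul_right hselP _
  calc 1 + ev (step OneMinMax select mutate P) G
      ≤ p⁻¹ * ev (select P) (fun x => if x ∈ {x | isGood OneMinMax P x} then 1 else 0)
          + ∑' s, select P s * ev (mutate s) (fun s' => G (updatePop OneMinMax P s')) := by
        rw [hstep]
        exact add_le_add_left hone _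
    _ = ∑' s, select P s * (ev (mutate s) (fun s' => G (updatePop OneMinMax P s'))
          + p⁻¹ * (if s ∈ {x | isGood OneMinMax P x} then 1 else 0)) := by
        rw [ev, ← ENNReal.tsum_mul_left, ← ENNReal.tsum_add]
        apply tsum_congr
        intro s
        ring
    _ ≤ ∑' s, select P s * hpot n p P := by
        apply ENNReal.tsum_le_tsum
        intro s
        apply mul_le_mul_right
        by_cases hgs : isGood OneMinMax P s
        · have hif : (if s ∈ {x | isGood OneMinMax P x} then (1 : ℝ≥0∞) else 0) = 1 :=
            if_pos hgs
          rw [hif, mul_one]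
          exact hF s hgs
        · have hif : (if s ∈ {x | isGood OneMinMax P x} then (1 : ℝ≥0∞) else 0) = 0 :=
            if_neg hgs
          rw [hif, mul_zero, add_zero]
          calc ev (mutate s) (fun s' => G (updatePop OneMinMax P s'))
              ≤ ev (mutate s) (fun _ => hpot n p P) := ev_mono _ hGle
            _ = hpot n p P := ev_const _ _
    _ = hpot n p P := by
        rw [ENNReal.tsum_mul_right, PMF.tsum_coe, one_mul]

lemma step_support (f : BitString n → ℤ × ℤ)
    (select : Finset (BitString n) → PMF (BitString n))
    (mutate : BitString n → PMF (BitString n)) (P Q : Finset (BitString n))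
    (hQ : Q ∈ (step f select mutate P).support) :
    ∃ s', Q = updatePop f P s' := by
  rw [step] at hQ
  obtain ⟨s, -, hQ2⟩ := (PMF.mem_support_bind_iff _ _ _).mp hQ
  obtain ⟨s', -, h⟩ := (PMF.mem_support_map_iff _ _ _).mp hQ2
  exact ⟨s', h.symm⟩

lemma initDist_support (Q : Finset (BitString n)) (hQ : Q ∈ (initDist n).support) :
    Q.Nonempty := by
  rw [initDist] at hQ
  obtain ⟨x, -, h⟩ := (PMF.mem_support_map_iff _ _ _).mp hQ
  rw [← h]
  exact Finset.singleton_nonempty x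

lemma hpot_le (hn : 0 < n) (p : ℝ≥0∞) (P : Finset (BitString n)) :
    hpot n p P ≤ ENNReal.ofReal (12 * n * (Real.log n + 1)) / p := by
  have h1 : hpot n p P
      ≤ ((3 * n : ℕ) : ℝ≥0∞) * p⁻¹ * ∑ v ∈ Finset.range (n + 1), wgt n v := by
    apply mul_le_mul_right
    apply Finset.sum_le_sum_of_subset
    exact Finset.sdiff_subset
  have h2 : ∑ v ∈ Finset.range (n + 1), wgt n v
      = 2 * ∑ v ∈ Finset.range (n + 1), ((v + 1 : ℕ) : ℝ≥0∞)⁻¹ := by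
    simp only [wgt]
    rw [Finset.sum_add_distrib]
    have hrefl := Finset.sum_range_reflect (fun v => (((v + 1 : ℕ)) : ℝ≥0∞)⁻¹) (n + 1)
    simp only [Nat.add_sub_cancel] at hrefl
    rw [hrefl, two_mul]
  have h3 : ∑ v ∈ Finset.range (n + 1), ((v + 1 : ℕ) : ℝ≥0∞)⁻¹
      = ENNReal.ofReal ((harmonic (n + 1) : ℝ)) := by
    have hc : ((harmonic (n + 1) : ℚ) : ℝ) = ∑ i ∈ Finset.range (n + 1), ((i : ℝ) + 1)⁻¹ := by
      rw [harmonic]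
      push_cast
      rfl
    rw [hc, ENNReal.ofReal_sum_of_nonneg (fun i _ => by positivity)]
    apply Finset.sum_congr rfl
    intro i _
    rw [ENNReal.ofReal_inv_of_pos (by positivity)]
    congr 1
    rw [show ((i : ℝ) + 1) = ((i + 1 : ℕ) : ℝ) from by push_cast; ring,
      ENNReal.ofReal_natCast]
  have h4 : (harmonic (n + 1) : ℝ) ≤ 2 * (Real.log n + 1) := by
    have hbase := harmonic_le_one_add_log (n + 1)
    have hn1 : (1 : ℝ) ≤ (n : ℝ) := by exact_mod_cast hn
    have hlog : Real.log (n + 1) ≤ Real.log 2 + Real.log n := by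
      rw [← Real.log_mul (by norm_num) (by linarith)]
      apply Real.log_le_log (by linarith)
      linarith
    have hlog2 : Real.log 2 ≤ 1 := by
      rw [Real.log_le_iff_le_exp (by norm_num)]
      exact le_of_lt (lt_trans (by norm_num) Real.exp_one_gt_d9)
    have hlogn : 0 ≤ Real.log n := Real.log_nonneg hn1
    have hcast : ((n : ℝ) + 1) = ((n + 1 : ℕ) : ℝ) := by push_cast; ring
    rw [← hcast] at hbase
    linarith
  have hharm0 : (0 : ℝ) ≤ (harmonic (n + 1) : ℝ) := by
    exact_mod_cast le_of_lt (harmonic_pos (by omega : n + 1 ≠ 0))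
  calc hpot n p P
      ≤ ((3 * n : ℕ) : ℝ≥0∞) * p⁻¹ * (2 * ENNReal.ofReal ((harmonic (n + 1) : ℝ))) := by
        rw [← h3, ← h2]
        exact h1
    _ = ((3 * n : ℕ) : ℝ≥0∞) * (2 * ENNReal.ofReal ((harmonic (n + 1) : ℝ))) * p⁻¹ := by
        ring
    _ ≤ ENNReal.ofReal (12 * n * (Real.log n + 1)) * p⁻¹ := by
        apply mul_le_mul_left
        rw [show ((3 * n : ℕ) : ℝ≥0∞) = ENNReal.ofReal ((3 * n : ℕ) : ℝ) from
            (ENNReal.ofReal_natCast _).symm,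
          show (2 : ℝ≥0∞) = ENNReal.ofReal 2 from by norm_num,
          ← ENNReal.ofReal_mul (by norm_num : (0:ℝ) ≤ 2),
          ← ENNReal.ofReal_mul (by positivity : (0:ℝ) ≤ ((3 * n : ℕ) : ℝ))]
        apply ENNReal.ofReal_le_ofReal
        push_cast
        nlinarith [mul_le_mul_of_nonneg_left h4 (by positivity : (0 : ℝ) ≤ 6 * n)]
    _ = ENNReal.ofReal (12 * n * (Real.log n + 1)) / p := by
        rw [div_eq_mul_inv]

end Drift

/-- For SEMO or GSEMO on OneMinMax with any parent selection (supported on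
the current population) that, whenever the population does not cover the whole Pareto
front, selects a good individual with probability at least `p`, the expected number of
iterations until the population covers the whole Pareto front is at most
`O((n log n)/p)` — explicitly at most `C·n·(ln n + 1)/p` for a universal constant `C`. -/
theorem oneminmax_runtime_with_pgood :
    ∃ C : ℝ, 0 < C ∧ ∀ n : ℕ, ∀ hn : 0 < n, ∀ p : ℝ≥0∞, 0 < p → p ≤ 1 →
      ∀ select : Finset (BitString n) → PMF (BitString n),
        (∀ P : Finset (BitString n), P.Nonempty →
          ∀ x ∈ (select P).support, x ∈ P) →
        (∀ P : Finset (BitString n), P.Nonempty → mutuallyNonDominated OneMinMax P →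
          ¬ coversFront OneMinMax P →
          p ≤ (select P).toOuterMeasure {x | isGood OneMinMax P x}) →
        ∀ mutate : BitString n → PMF (BitString n),
          (mutate = localMutation hn ∨ mutate = globalMutation) →
          expectedRuntime (initDist n) (step OneMinMax select mutate)
              (coversFront OneMinMax) ≤
            ENNReal.ofReal (C * n * (Real.log n + 1)) / p := by
  refine ⟨12, by norm_num, ?_⟩
  intro n hn p hp0 hp1 select hsupp hsel mutate hmutcase
  have hmut : mutOK n mutate := by
    rcases hmutcase with rfl | rfl
    · exact mutOK_local hn
    · exact mutOK_global hn
  apply runtime_le (initDist n) (step OneMinMax select mutate) (coversFront OneMinMax)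
    (fun P => P.Nonempty) (hpot n p)
    (ENNReal.ofReal (12 * n * (Real.log n + 1)) / p)
  · exact fun P hP => initDist_support P hP
  · intro P hP Q hQ
    obtain ⟨s', rfl⟩ := step_support OneMinMax select mutate P Q hQ
    exact updatePop_nonempty P s'
  · intro P hP hg Q hQ
    obtain ⟨s', rfl⟩ := step_support OneMinMax select mutate P Q hQ
    exact coversFront_updatePop hg s'
  · intro P hP hng
    exact step_drift hn p hp0.ne' hp1 select hsel mutate hmut P hP hng
  · intro P
    exact hpot_le hn p P

end EMO
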